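/- Let (G_i)_{i ∈ ι} be a family of groups, let G be their free product, and for each i let A_i denote the image of G_i under the canonical inclusion G_i → G. Then for every index i_0 and every element g of G \ A_{i_0}, the intersection A_{i_0} ∩ g A_{i_0} g⁻¹ is trivial. In particular each free factor A_{i_0} is malnormal in G. -/

import Mathlib

/-- The conjugate subgroup `g H g⁻¹`. -/
def conjSub {G : Type*} [Group G] (g : G) (H : Subgroup G) : Subgroup G :=
  H.map (MulAut.conj g).toMonoidHom

/-- A subgroup `H` of `G` is malnormal if for every `g ∉ H` the
intersection `H ∩ gHg⁻¹` is trivial. -/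
def Malnormal {G : Type*} [Group G] (H : Subgroup G) : Prop :=
  ∀ g : G, g ∉ H → H ⊓ conjSub g H = ⊥


namespace FFM

open Monoid Monoid.CoprodI Monoid.CoprodI.Word

variable {ι : Type*} {G : ι → Type*} [∀ i, Group (G i)]

def invWord (w : Word G) : Word G where
  toList := (w.toList.map fun l => ⟨l.1, l.2⁻¹⟩).reverse
  ne_one := by
    intro l hl
    simp only [List.mem_reverse, List.mem_map] at hl
    obtain ⟨l', hl', rfl⟩ := hl
    simpa using w.ne_one l' hl'
  chain_ne := by
    rw [List.isChain_reverse]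
    refine List.isChain_map_of_isChain _ ?_ w.chain_ne
    intro a b h
    exact fun h' => h h'.symm

theorem invWord_prod (w : Word G) : (invWord w).prod = w.prod⁻¹ := by
  simp only [Word.prod, invWord, List.map_reverse, List.map_map]
  rw [List.prod_inv_reverse]
  congr 1
  rw [List.map_map]
  rfl

def concatWord (w : Word G) {i : ι} (b : G i) (hb : b ≠ 1)
    (h : ∀ l ∈ w.toList.getLast?, Sigma.fst l ≠ i) : Word G where
  toList := w.toList ++ [⟨i, b⟩]
  ne_one := by
    intro l hl
    rcases List.mem_append.1 hl with h' | h'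
    · exact w.ne_one l h'
    · simp only [List.mem_singleton] at h'
      subst h'
      exact hb
  chain_ne := by
    refine List.isChain_append.2 ⟨w.chain_ne, List.isChain_singleton _, ?_⟩
    intro x hx y hy
    simp only [List.head?_cons, Option.mem_def, Option.some.injEq] at hy
    subst hy
    exact h x hx

theorem concatWord_prod (w : Word G) {i : ι} (b : G i) (hb : b ≠ 1) (h) :
    (concatWord w b hb h).prod = w.prod * of b := by
  simp [Word.prod, concatWord]

theorem prod_injective [DecidableEq ι] [∀ i, DecidableEq (G i)] :
    Function.Injective (Word.prod : Word G → CoprodI G) := fun w₁ w₂ h =>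
  Word.equiv.symm.injective h

theorem claimC [DecidableEq ι] [∀ i, DecidableEq (G i)] {i₀ : ι} {v : Word G} {a b : G i₀}
    (ha : a ≠ 1) (hb : b ≠ 1)
    (hlast : ∀ l ∈ v.toList.getLast?, Sigma.fst l ≠ i₀)
    (heq : of a * v.prod = v.prod * of b) : v.toList = [] := by
  by_contra hne
  set w₂ := concatWord v b hb hlast with hw₂
  have hwords : of a • v = w₂ := by
    apply prod_injective
    rw [Word.prod_smul, concatWord_prod, heq]
  rw [Word.of_smul_def] at hwords
  set q := Word.equivPair i₀ v with hqdef
  have hq : Word.rcons q = v := by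
    rw [← Word.equivPair_symm]
    exact (Word.equivPair i₀).symm_apply_apply v
  have hlists := congrArg Word.toList hwords
  by_cases h1 : q.head = 1
  · have hvq : q.tail.toList = v.toList := by
      rw [← hq]; simp [Word.rcons, h1]
    have hLHS : (Word.rcons ⟨a * q.head, q.tail, q.fstIdx_ne⟩).toList
        = ⟨i₀, a⟩ :: v.toList := by
      simp [Word.rcons, h1, ha, Word.cons, hvq]
    rw [hLHS] at hlists
    have hconcat : w₂.toList = v.toList ++ [⟨i₀, b⟩] := rfl
    rw [hconcat] at hlists
    rcases hv : v.toList with _ | ⟨y, L⟩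
    · exact hne hv
    · rw [hv] at hlists
      have hlast' := hlast ⟨i₀, b⟩
      rw [hv] at hlast'
      apply hlast' _ rfl
      have := congrArg List.getLast? hlists
      rw [List.getLast?_cons_cons, List.getLast?_concat] at this
      rw [Option.mem_def, this]
  · have hvq : v.toList = ⟨i₀, q.head⟩ :: q.tail.toList := by
      rw [← hq]; simp [Word.rcons, h1, Word.cons]
    have hlen := congrArg List.length hlists
    have hconcat : w₂.toList = v.toList ++ [⟨i₀, b⟩] := rfl
    rw [hconcat, hvq] at hlen
    by_cases h2 : a * q.head = 1 <;>
      simp [Word.rcons, h2, Word.cons] at hlen <;> omega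

theorem key {i₀ : ι} {g : CoprodI G} {a b : G i₀} (ha : a ≠ 1)
    (heq : of a * g = g * of b) :
    g ∈ (of : G i₀ →* CoprodI G).range := by
  classical
  have hb : b ≠ 1 := by
    rintro rfl
    rw [map_one, mul_one] at heq
    apply ha
    apply of_injective i₀
    rw [map_one]
    have : of a * g = 1 * g := by rw [one_mul, heq]
    exact mul_right_cancel this
  set W := Word.equiv (M := G) g⁻¹ with hWdef
  set q := Word.equivPair i₀ W with hqdef
  have hW : W.prod = g⁻¹ := Word.equiv.symm_apply_apply g⁻¹
  have hq : Word.rcons q = W := by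
    rw [← Word.equivPair_symm]
    exact (Word.equivPair i₀).symm_apply_apply W
  have hdec : of q.head * q.tail.prod = g⁻¹ := by
    rw [← Word.prod_rcons, hq, hW]
  set v := invWord q.tail with hvdef
  have hvlast : ∀ l ∈ v.toList.getLast?, Sigma.fst l ≠ i₀ := by
    intro l hl
    simp only [hvdef, invWord, List.getLast?_reverse, List.head?_map, Option.mem_def,
      Option.map_eq_some_iff] at hl
    obtain ⟨l', hl', rfl⟩ := hl
    have h2 := Word.fstIdx_ne_iff.mp q.fstIdx_ne l' hl'
    exact fun h => h2 (by simpa using h.symm)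
  have hg : g = v.prod * of q.head⁻¹ := by
    rw [invWord_prod, map_inv]
    rw [← inv_inv g, ← hdec, mul_inv_rev]
  have heq' : of a * v.prod = v.prod * of (q.head⁻¹ * b * q.head) := by
    have h2 : of a * (v.prod * of q.head⁻¹) * of q.head
        = v.prod * of q.head⁻¹ * of b * of q.head := by
      rw [← hg, heq, hg]
    simp only [← map_mul, inv_mul_cancel, map_one, mul_one, mul_assoc] at h2 ⊢
    exact h2
  have hb' : q.head⁻¹ * b * q.head ≠ 1 := by
    intro h
    apply hb
    have := congrArg (fun x => q.head * x * q.head⁻¹) h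
    simpa [mul_assoc] using this
  have hv := claimC ha hb' hvlast heq'
  have hvp : v.prod = 1 := by
    rw [Word.prod, hv]
    rfl
  exact ⟨q.head⁻¹, by rw [hg, hvp, one_mul]⟩


end FFM

/-- In a free product `G = ∗ᵢ Gᵢ`, each free factor `A_{i₀}` (the image of
`G_{i₀}` under the canonical inclusion) satisfies `A_{i₀} ∩ g A_{i₀} g⁻¹ = 1`
for every `g ∉ A_{i₀}`; in particular every free factor is malnormal. -/
theorem freeFactor_malnormal {ι : Type*} (G : ι → Type*) [∀ i, Group (G i)]
    (i₀ : ι) :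
    (∀ g : Monoid.CoprodI G,
        g ∉ (Monoid.CoprodI.of : G i₀ →* Monoid.CoprodI G).range →
        (Monoid.CoprodI.of : G i₀ →* Monoid.CoprodI G).range ⊓
          conjSub g (Monoid.CoprodI.of : G i₀ →* Monoid.CoprodI G).range = ⊥) ∧
      Malnormal (Monoid.CoprodI.of : G i₀ →* Monoid.CoprodI G).range := by
  have H : ∀ g : Monoid.CoprodI G,
      g ∉ (Monoid.CoprodI.of : G i₀ →* Monoid.CoprodI G).range →
      (Monoid.CoprodI.of : G i₀ →* Monoid.CoprodI G).range ⊓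
        conjSub g (Monoid.CoprodI.of : G i₀ →* Monoid.CoprodI G).range = ⊥ := by
    intro g hg
    rw [eq_bot_iff]
    intro x hx
    rw [Subgroup.mem_inf] at hx
    obtain ⟨⟨a, rfl⟩, hx2⟩ := hx
    rw [conjSub, Subgroup.mem_map] at hx2
    obtain ⟨y, ⟨b, rfl⟩, hy⟩ := hx2
    simp only [MulEquiv.toMonoidHom_eq_coe, MonoidHom.coe_coe, MulAut.conj_apply] at hy
    by_cases ha : a = 1
    · rw [Subgroup.mem_bot, ha, map_one]
    · exfalso
      apply hg
      apply FFM.key ha (b := b)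
      rw [← hy]
      group
  exact ⟨H, H⟩
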